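/- Under the standing setup, there is exactly one prime q_i in S with 2β_i + 1 = ℓ^3, and the other three primes q_i in S satisfy 2β_i + 1 = ℓ^2. -/

import Mathlib

open Finset

/-- geometric sum `1 + q + ... + q^(k-1)` -/
def gs (q k : ℕ) : ℕ := ∑ u ∈ Finset.range k, q ^ u

lemma gs_pos {q k : ℕ} (hk : 0 < k) : 0 < gs q k := by
  unfold gs
  have : (0:ℕ) < q ^ 0 := by simp
  calc 0 < q ^ 0 := this
    _ ≤ ∑ u ∈ Finset.range k, q ^ u := by
        apply Finset.single_le_sum (f := fun u => q ^ u)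
        · intro i _; positivity
        · simpa using hk

lemma gs_succ (q k : ℕ) : gs q (k + 1) = gs q k + q ^ k := by
  simp [gs, Finset.sum_range_succ]

lemma pow_eq_one_add {y : ℕ} (hy : 1 ≤ y) (k : ℕ) : y ^ k = 1 + (y - 1) * gs y k := by
  obtain ⟨c, rfl⟩ := Nat.exists_eq_add_of_le hy
  simp only [Nat.add_sub_cancel_left]
  induction k with
  | zero => simp [gs]
  | succ k ih =>
    rw [gs_succ, pow_succ]
    calc (1+c)^k * (1+c) = (1+c)^k + c * (1+c)^k := by ring
      _ = (1 + c * gs (1+c) k) + c * (1+c)^k := by rw [← ih]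
      _ = 1 + c * (gs (1+c) k + (1+c)^k) := by ring

lemma gs_mul (q a b : ℕ) : gs q (a * b) = gs (q ^ a) b * gs q a := by
  induction b with
  | zero => simp [gs]
  | succ b ih =>
    have h1 : a * (b + 1) = a * b + a := by ring
    rw [h1]
    unfold gs at *
    rw [Finset.sum_range_add, ih, Finset.sum_range_succ]
    have h2 : ∀ x, q ^ (a * b + x) = (q ^ a) ^ b * q ^ x := by
      intro x; rw [← pow_mul, ← pow_add]
    simp only [h2]
    rw [← Finset.mul_sum]
    ring

lemma gs_dvd_gs (q : ℕ) {a n : ℕ} (h : a ∣ n) : gs q a ∣ gs q n := by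
  obtain ⟨b, rfl⟩ := h
  rw [gs_mul]
  exact dvd_mul_left _ _

lemma gs_block_dvd (q : ℕ) {a b n : ℕ} (h : a * b ∣ n) : gs (q ^ a) b ∣ gs q n := by
  have h1 : gs (q ^ a) b ∣ gs q (a * b) := by
    rw [gs_mul]; exact dvd_mul_right _ _
  exact h1.trans (gs_dvd_gs q h)

lemma gs_cast (t q k : ℕ) : ((gs q k : ℕ) : ZMod t) = ∑ u ∈ Finset.range k, (q : ZMod t) ^ u := by
  unfold gs
  push_cast
  rfl

lemma dvd_gs_iff (t q k : ℕ) [NeZero t] :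
    t ∣ gs q k ↔ ∑ u ∈ Finset.range k, (q : ZMod t) ^ u = 0 := by
  rw [← ZMod.natCast_eq_zero_iff, gs_cast]

lemma pow_eq_one_of_dvd_gs {t q k : ℕ} (hq : 1 ≤ q) (h : t ∣ gs q k) :
    (q : ZMod t) ^ k = 1 := by
  have h1 := pow_eq_one_add hq k
  obtain ⟨c, hc⟩ := h
  have h2 : (q:ℕ) ^ k = 1 + (q - 1) * (t * c) := by rw [← hc]; exact h1
  calc (q : ZMod t) ^ k = ((q ^ k : ℕ) : ZMod t) := by push_cast; ring
    _ = ((1 + (q - 1) * (t * c) : ℕ) : ZMod t) := by rw [← h2]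
    _ = 1 := by push_cast; simp [ZMod.natCast_self]

lemma dvd_k_of_dvd_gs {t q k : ℕ} [NeZero t] (h1 : (q : ZMod t) = 1) (h : t ∣ gs q k) :
    t ∣ k := by
  rw [dvd_gs_iff, h1] at h
  simp at h
  exact (ZMod.natCast_eq_zero_iff k t).mp h


-- ### structure: if y ≡ 1 mod p (p odd prime) then gs y p = p * (1 + p * c)
lemma gs_p_struct {p y : ℕ} (hp : p.Prime) (hop : Odd p) (hy : 1 ≤ y)
    (h1 : (y : ZMod p) = 1) : ∃ c, gs y p = p * (1 + p * c) := by
  haveI : Fact p.Prime := ⟨hp⟩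
  -- p ∣ y - 1
  have hmod : y ≡ 1 [MOD p] := by
    have := (ZMod.natCast_eq_natCast_iff y 1 p).mp (by simpa using h1)
    exact this
  have hdvd : p ∣ y - 1 := (Nat.modEq_iff_dvd' hy).mp hmod.symm
  obtain ⟨d, hd⟩ := hdvd
  -- identity : gs y p = p + (y-1) * S
  set S := ∑ u ∈ Finset.range p, gs y u with hS
  have hid : gs y p = p + (y - 1) * S := by
    have : ∀ u, y ^ u = 1 + (y - 1) * gs y u := fun u => pow_eq_one_add hy u
    unfold gs
    calc ∑ u ∈ Finset.range p, y ^ u = ∑ u ∈ Finset.range p, (1 + (y - 1) * gs y u) := by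
          exact Finset.sum_congr rfl (fun u _ => this u)
      _ = p + (y - 1) * S := by
          rw [Finset.sum_add_distrib, ← Finset.mul_sum]
          simp [hS]
  -- p ∣ S
  have hpS : p ∣ S := by
    have hcast : (S : ZMod p) = ((∑ u ∈ Finset.range p, u : ℕ) : ZMod p) := by
      rw [hS]
      push_cast
      apply Finset.sum_congr rfl
      intro u _
      rw [gs_cast, h1]
      simp
    have hsum2 : (∑ u ∈ Finset.range p, u) * 2 = p * (p - 1) := Finset.sum_range_id_mul_two p
    have hpdvd2 : p ∣ (∑ u ∈ Finset.range p, u) * 2 := hsum2 ▸ Dvd.intro _ rfl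
    have hcop : Nat.Coprime p 2 := by
      have h2 : ¬ 2 ∣ p := by
        rcases hop with ⟨k, hk⟩; omega
      exact (Nat.Prime.coprime_iff_not_dvd Nat.prime_two).mpr h2 |>.symm
    have : p ∣ (∑ u ∈ Finset.range p, u) := (Nat.Coprime.dvd_of_dvd_mul_right hcop) hpdvd2
    rw [← ZMod.natCast_eq_zero_iff] at this ⊢
    rw [hcast, this]
  obtain ⟨e, he⟩ := hpS
  refine ⟨d * e, ?_⟩
  rw [hid, hd, he]
  ring

-- ### p-valuation of gs y p is ≤ 1 (p odd prime), for arbitrary y ≥ 1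
lemma gs_p_fact_le_one {p y : ℕ} (hp : p.Prime) (hop : Odd p) (hy : 1 ≤ y) :
    (gs y p).factorization p ≤ 1 := by
  haveI : Fact p.Prime := ⟨hp⟩
  by_cases h0 : (y : ZMod p) = 0
  · -- p ∣ y : gs y p ≡ 1 mod p
    have hnd : ¬ p ∣ gs y p := by
      rw [dvd_gs_iff, h0]
      intro hcon
      rw [Finset.sum_eq_single 0] at hcon
      · simp at hcon
      · intro b _ hb; exact zero_pow hb
      · intro h; exact absurd (Finset.mem_range.mpr hp.pos) h
    simp [Nat.factorization_eq_zero_of_not_dvd hnd]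
  by_cases h1 : (y : ZMod p) = 1
  · obtain ⟨c, hc⟩ := gs_p_struct hp hop hy h1
    rw [hc, Nat.factorization_mul hp.pos.ne' (by positivity)]
    have : (1 + p * c).factorization p = 0 := by
      apply Nat.factorization_eq_zero_of_not_dvd
      intro hcon
      have : p ∣ 1 := (Nat.dvd_add_right ⟨c, rfl⟩).mp (by rwa [Nat.add_comm] at hcon)
      exact Nat.Prime.one_lt hp |>.ne' (Nat.dvd_one.mp this)
    rw [Finsupp.add_apply, Nat.Prime.factorization hp, this]
    simp
  · -- p ∤ gs y p
    have hnd : ¬ p ∣ gs y p := by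
      intro hdvd
      have hpow : (y : ZMod p) ^ p = 1 := pow_eq_one_of_dvd_gs hy hdvd
      have hordp : orderOf (y : ZMod p) ∣ p := orderOf_dvd_iff_pow_eq_one.mpr hpow
      have hcard : (y : ZMod p) ^ (p - 1) = 1 := ZMod.pow_card_sub_one_eq_one h0
      have hordp1 : orderOf (y : ZMod p) ∣ p - 1 := orderOf_dvd_iff_pow_eq_one.mpr hcard
      have hp3 : 3 ≤ p := by
        have h2 := hp.two_le
        rcases hop with ⟨k, hk⟩
        omega
      have : orderOf (y : ZMod p) = 1 := by
        rcases (Nat.Prime.eq_one_or_self_of_dvd hp _ hordp) with h | h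
        · exact h
        · exfalso; rw [h] at hordp1
          have := Nat.le_of_dvd (by omega) hordp1
          omega
      exact h1 (orderOf_eq_one_iff.mp this)
    simp [Nat.factorization_eq_zero_of_not_dvd hnd]


lemma gs_lower {y k : ℕ} (hy : 1 ≤ y) (hk : 2 ≤ k) : y ^ (k-1) < gs y k := by
  obtain ⟨j, rfl⟩ : ∃ j, k = j + 1 := ⟨k - 1, by omega⟩
  rw [gs_succ]
  have h1 : 0 < gs y j := gs_pos (by omega)
  simp only [Nat.add_sub_cancel]
  omega

lemma gs_le {y k : ℕ} (hy : 1 ≤ y) : gs y k ≤ k * y ^ (k - 1) := by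
  unfold gs
  calc ∑ u ∈ Finset.range k, y ^ u ≤ ∑ u ∈ Finset.range k, y ^ (k-1) := by
        apply Finset.sum_le_sum
        intro u hu
        exact Nat.pow_le_pow_right hy (by have := Finset.mem_range.mp hu; omega)
    _ = k * y ^ (k-1) := by rw [Finset.sum_const, Finset.card_range, smul_eq_mul]

lemma lt_three_pow : ∀ k : ℕ, k + 2 < 3 ^ (k + 1) := by
  intro k
  induction k with
  | zero => norm_num
  | succ k ih =>
    have : 3 ^ (k + 1 + 1) = 3 * 3 ^ (k + 1) := by ring
    omega

lemma lt_three_pow_pred {p : ℕ} (h : 2 ≤ p) : p < 3 ^ (p - 1) := by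
  obtain ⟨k, rfl⟩ : ∃ k, p = k + 2 := ⟨p - 2, by omega⟩
  have := lt_three_pow k
  simpa using this

lemma sq_le_nine_pow : ∀ k : ℕ, (k + 3) ^ 2 ≤ 9 ^ (k + 1) := by
  intro k
  induction k with
  | zero => norm_num
  | succ k ih =>
    have h1 : 9 ^ (k + 1 + 1) = 9 * 9 ^ (k + 1) := by ring
    have h2 : (k + 1 + 3) ^ 2 ≤ 2 * (k + 3) ^ 2 := by ring_nf; nlinarith [sq_nonneg k]
    omega

lemma fact_p_mul {p c : ℕ} (hp : p.Prime) : (p * (1 + p * c)).factorization p = 1 := by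
  rw [Nat.factorization_mul hp.pos.ne' (by positivity), Finsupp.add_apply,
      Nat.Prime.factorization hp]
  have h0 : (1 + p * c).factorization p = 0 := by
    apply Nat.factorization_eq_zero_of_not_dvd
    intro hcon
    have : p ∣ 1 := (Nat.dvd_add_right ⟨c, rfl⟩).mp (by rwa [Nat.add_comm] at hcon)
    exact hp.one_lt.ne' (Nat.dvd_one.mp this)
  simp [h0]

lemma exists_prime_dvd_ne {pp B : ℕ} (hp : pp.Prime) (hlt : pp < B)
    (hv : B.factorization pp ≤ 1) : ∃ t, t.Prime ∧ t ∣ B ∧ t ≠ pp := by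
  have hB0 : B ≠ 0 := by omega
  set K := B / pp ^ B.factorization pp with hK
  have hself : pp ^ B.factorization pp * K = B := Nat.ordProj_mul_ordCompl_eq_self B pp
  have hKd : K ∣ B := Dvd.intro_left _ hself
  have hnd : ¬ pp ∣ K := Nat.not_dvd_ordCompl hp hB0
  have hK1 : K ≠ 1 := by
    intro h
    rw [h, mul_one] at hself
    have hle : pp ^ B.factorization pp ≤ pp ^ 1 := Nat.pow_le_pow_right hp.pos hv
    rw [pow_one] at hle
    omega
  obtain ⟨t, ht, htd⟩ := Nat.exists_prime_and_dvd hK1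
  exact ⟨t, ht, htd.trans hKd, fun h => hnd (h ▸ htd)⟩

lemma exists_prime_dvd_ne_ne {pp rr B : ℕ} (hp : pp.Prime) (hr : rr.Prime) (hne : pp ≠ rr)
    (hlt : pp * rr < B) (hvp : B.factorization pp ≤ 1) (hvr : B.factorization rr ≤ 1) :
    ∃ t, t.Prime ∧ t ∣ B ∧ t ≠ pp ∧ t ≠ rr := by
  have hB0 : B ≠ 0 := by omega
  set K := B / pp ^ B.factorization pp with hKdef
  have hself : pp ^ B.factorization pp * K = B := Nat.ordProj_mul_ordCompl_eq_self B pp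
  have hKd : K ∣ B := Dvd.intro_left _ hself
  have hndp : ¬ pp ∣ K := Nat.not_dvd_ordCompl hp hB0
  have hK0 : K ≠ 0 := by
    intro h; rw [h, mul_zero] at hself; omega
  have hrK : rr < K := by
    have h1 : pp ^ B.factorization pp ≤ pp ^ 1 := Nat.pow_le_pow_right hp.pos hvp
    have h2 : B ≤ pp * K := by
      calc B = pp ^ B.factorization pp * K := hself.symm
        _ ≤ pp ^ 1 * K := Nat.mul_le_mul_right _ h1
        _ = pp * K := by ring
    have h3 : pp * rr < pp * K := lt_of_lt_of_le hlt h2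
    exact lt_of_mul_lt_mul_left h3 (Nat.zero_le _)
  have hvrK : K.factorization rr ≤ 1 := by
    have := Nat.factorization_ordCompl B pp
    rw [hKdef, this]
    rw [Finsupp.erase_ne (Ne.symm hne)]
    exact hvr
  set K2 := K / rr ^ K.factorization rr with hK2def
  have hself2 : rr ^ K.factorization rr * K2 = K := Nat.ordProj_mul_ordCompl_eq_self K rr
  have hK2d : K2 ∣ K := Dvd.intro_left _ hself2
  have hndr : ¬ rr ∣ K2 := Nat.not_dvd_ordCompl hr hK0
  have hK21 : K2 ≠ 1 := by
    intro h
    rw [h, mul_one] at hself2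
    have hle : rr ^ K.factorization rr ≤ rr ^ 1 := Nat.pow_le_pow_right hr.pos hvrK
    rw [pow_one] at hle
    omega
  obtain ⟨t, ht, htd⟩ := Nat.exists_prime_and_dvd hK21
  refine ⟨t, ht, (htd.trans hK2d).trans hKd, ?_, fun h => hndr (h ▸ htd)⟩
  intro h
  exact hndp (h ▸ (htd.trans hK2d))

lemma gs_pp_fact {p q : ℕ} (hp : p.Prime) (hop : Odd p) (hq : 1 ≤ q)
    (hq1 : (q : ZMod p) = 1) (a : ℕ) :
    (gs q (p ^ a)).factorization p = a := by
  induction a with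
  | zero => simp [gs]
  | succ a ih =>
    have h1 : p ^ (a + 1) = p ^ a * p := by ring
    rw [h1, gs_mul]
    have hy1 : (1:ℕ) ≤ q ^ p ^ a := Nat.one_le_pow _ _ (by omega)
    have hcast : ((q ^ p ^ a : ℕ) : ZMod p) = 1 := by push_cast; rw [hq1]; simp
    obtain ⟨c, hc⟩ := gs_p_struct hp hop hy1 hcast
    rw [Nat.factorization_mul (by rw [hc]; exact Nat.mul_ne_zero hp.pos.ne' (by omega))
        (gs_pos (pow_pos hp.pos a)).ne', Finsupp.add_apply, hc, fact_p_mul hp, ih]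
    omega


lemma ineq_helper (a b : ℕ) : (a+2) + 2*(b+1) ≤ (a+2)*(b+2) := by nlinarith

lemma odd_prime_three_le {p : ℕ} (hp : p.Prime) (hop : Odd p) : 3 ≤ p := by
  have := hp.two_le
  rcases hop with ⟨k, hk⟩
  omega

lemma demandB {p q n : ℕ} (hp : p.Prime) (hop : Odd p) (hq3 : 3 ≤ q) (hqp : ¬ p ∣ q)
    {j : ℕ} (hj : 1 ≤ j) (hdvd : p ^ j ∣ n) :
    ∃ t, t.Prime ∧ t ∣ gs q n ∧ t ≠ p ∧ orderOf (q : ZMod t) = p ^ j := by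
  haveI : Fact p.Prime := ⟨hp⟩
  have hjj : p ^ (j-1) * p = p ^ j := by
    rw [← pow_succ]; congr 1; omega
  set y := q ^ (p ^ (j-1)) with hy
  have hy3 : 3 ≤ y := le_trans hq3 (Nat.le_self_pow (pow_pos hp.pos _).ne' q)
  have hy1 : 1 ≤ y := by omega
  set B := gs y p with hB
  have hBdvd : B ∣ gs q n := by
    apply gs_block_dvd
    rw [hjj]; exact hdvd
  have hp2 := hp.two_le
  have hBgt : p < B := by
    have h1 : p < 3 ^ (p - 1) := lt_three_pow_pred hp2
    have h2 : (3:ℕ) ^ (p-1) ≤ y ^ (p-1) := Nat.pow_le_pow_left hy3 _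
    have h3 : y ^ (p-1) < B := gs_lower hy1 (by omega)
    omega
  have hv : B.factorization p ≤ 1 := gs_p_fact_le_one hp hop hy1
  obtain ⟨t, ht, htB, htp⟩ := exists_prime_dvd_ne hp hBgt hv
  haveI : Fact t.Prime := ⟨ht⟩
  haveI : NeZero t := ⟨ht.pos.ne'⟩
  refine ⟨t, ht, htB.trans hBdvd, htp, ?_⟩
  have hyp1 : (y : ZMod t) ^ p = 1 := pow_eq_one_of_dvd_gs hy1 htB
  have hyne : (y : ZMod t) ≠ 1 := by
    intro h
    have hd := dvd_k_of_dvd_gs h htB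
    exact htp ((Nat.prime_dvd_prime_iff_eq ht hp).mp hd)
  have hcast : (y : ZMod t) = (q : ZMod t) ^ (p ^ (j-1)) := by rw [hy]; push_cast; ring
  have hqpow : (q : ZMod t) ^ (p ^ j) = 1 := by
    rw [← hjj, pow_mul, ← hcast, hyp1]
  have hford : orderOf (q : ZMod t) ∣ p ^ j := orderOf_dvd_iff_pow_eq_one.mpr hqpow
  have hnford : ¬ orderOf (q : ZMod t) ∣ p ^ (j-1) := by
    intro h
    apply hyne
    rw [hcast]
    exact orderOf_dvd_iff_pow_eq_one.mp h
  obtain ⟨c, hcle, hc⟩ := (Nat.dvd_prime_pow hp).mp hford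
  have hcj : c = j := by
    by_contra hcj
    exact hnford (hc ▸ pow_dvd_pow p (by omega))
  rw [hc, hcj]

set_option maxHeartbeats 1000000 in
lemma demandC {p r q n : ℕ} (hp : p.Prime) (hop : Odd p) (hr : r.Prime) (hor : Odd r)
    (hrp : r ≠ p) (hq3 : 3 ≤ q) (hqp : ¬ p ∣ q)
    {j : ℕ} (hj : 1 ≤ j) (hdvd : r * p ^ j ∣ n) :
    ∃ t, t.Prime ∧ t ∣ gs q n ∧ t ≠ p ∧ orderOf (q : ZMod t) = r * p ^ j := by
  haveI : Fact p.Prime := ⟨hp⟩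
  haveI : Fact r.Prime := ⟨hr⟩
  have hp3 : 3 ≤ p := odd_prime_three_le hp hop
  have hr3 : 3 ≤ r := odd_prime_three_le hr hor
  have hjj : p ^ (j-1) * p = p ^ j := by
    rw [← pow_succ]; congr 1; omega
  set x := q ^ (p ^ (j-1)) with hx
  have hx3 : 3 ≤ x := le_trans hq3 (Nat.le_self_pow (pow_pos hp.pos _).ne' q)
  have hx1 : 1 ≤ x := by omega
  set X := gs x r with hX
  set Y := gs x p with hY
  set Z' := gs (x ^ p) r with hZ'
  set Z := gs (x ^ r) p with hZdef
  have hZY : Z' * Y = gs x (p * r) := (gs_mul x p r).symm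
  have hZX : Z * X = gs x (r * p) := (gs_mul x r p).symm
  have hX0 : 0 < X := gs_pos hr.pos
  have hY0 : 0 < Y := gs_pos hp.pos
  have hZ'0 : 0 < Z' := gs_pos hr.pos
  have hZ0 : 0 < Z := gs_pos hp.pos
  -- coprimality of X and Y
  have hcop : Nat.Coprime X Y := by
    by_contra hnc
    obtain ⟨w, hw, hwX, hwY⟩ := Nat.Prime.not_coprime_iff_dvd.mp hnc
    haveI : Fact w.Prime := ⟨hw⟩
    haveI : NeZero w := ⟨hw.pos.ne'⟩
    have h1 : (x : ZMod w) ^ r = 1 := pow_eq_one_of_dvd_gs hx1 hwX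
    have h2 : (x : ZMod w) ^ p = 1 := pow_eq_one_of_dvd_gs hx1 hwY
    have hd1 : orderOf (x : ZMod w) ∣ r := orderOf_dvd_iff_pow_eq_one.mpr h1
    have hd2 : orderOf (x : ZMod w) ∣ p := orderOf_dvd_iff_pow_eq_one.mpr h2
    have hone : (x : ZMod w) = 1 := by
      rcases Nat.Prime.eq_one_or_self_of_dvd hr _ hd1 with h | h
      · exact orderOf_eq_one_iff.mp h
      · rcases Nat.Prime.eq_one_or_self_of_dvd hp _ hd2 with h' | h'
        · exact orderOf_eq_one_iff.mp h'
        · exact absurd (by rw [← h, ← h']) hrp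
    have hwr : w ∣ r := dvd_k_of_dvd_gs hone hwX
    have hwp : w ∣ p := dvd_k_of_dvd_gs hone hwY
    exact hrp (by rw [← (Nat.prime_dvd_prime_iff_eq hw hr).mp hwr,
                      ← (Nat.prime_dvd_prime_iff_eq hw hp).mp hwp])
  have hXZ' : X ∣ Z' := by
    apply hcop.dvd_of_dvd_mul_right
    rw [hZY, mul_comm p r, ← hZX]
    exact dvd_mul_left X Z
  set C := Z' / X with hCdef
  have hCX : C * X = Z' := Nat.div_mul_cancel hXZ'
  have hC0 : 0 < C := by
    rcases Nat.eq_zero_or_pos C with h | h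
    · rw [h, zero_mul] at hCX; omega
    · exact h
  have hZC : Z = C * Y := by
    have h1 : Z * X = (C * Y) * X := by
      rw [hZX, mul_comm r p, ← hZY, ← hCX]; ring
    exact Nat.eq_of_mul_eq_mul_right hX0 h1
  have hCZ' : C ∣ Z' := ⟨X, hCX.symm⟩
  have hCZ : C ∣ Z := ⟨Y, hZC⟩
  have hxp : x ^ p = q ^ (p ^ j) := by
    rw [hx, ← pow_mul, hjj]
  have hZ'gs : Z' ∣ gs q n := by
    rw [hZ', hxp]
    apply gs_block_dvd
    rwa [mul_comm]
  have hCgs : C ∣ gs q n := hCZ'.trans hZ'gs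
  -- valuations
  have hvZp : Z.factorization p ≤ 1 := gs_p_fact_le_one hp hop (Nat.one_le_pow _ _ (by omega))
  have hvZ'r : Z'.factorization r ≤ 1 := gs_p_fact_le_one hr hor (Nat.one_le_pow _ _ (by omega))
  have hvCp : C.factorization p ≤ 1 := by
    have hle := (Nat.factorization_le_iff_dvd hC0.ne' hZ0.ne').mpr hCZ
    exact le_trans (hle p) hvZp
  have hvCr : C.factorization r ≤ 1 := by
    have hle := (Nat.factorization_le_iff_dvd hC0.ne' hZ'0.ne').mpr hCZ'
    exact le_trans (hle r) hvZ'r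
  -- size : p * r < C
  have hsize : p * r < C := by
    have h1 : (x ^ p) ^ (r - 1) < Z' := gs_lower (Nat.one_le_pow _ _ (by omega)) (by omega)
    have h2 : X ≤ r * x ^ (r - 1) := gs_le hx1
    obtain ⟨p', hp'⟩ : ∃ p', p = p' + 3 := ⟨p - 3, by omega⟩
    obtain ⟨r', hr'⟩ : ∃ r', r = r' + 3 := ⟨r - 3, by omega⟩
    have hexp : (x ^ p) ^ (r-1) = x ^ ((p-1)*(r-1)) * x ^ (r-1) := by
      rw [← pow_mul, ← pow_add]
      congr 1
      have h5 : p - 1 + 1 = p := by omega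
      calc p * (r-1) = ((p-1)+1) * (r-1) := by rw [h5]
        _ = (p-1)*(r-1) + (r-1) := by ring
    have e1 : (p-1) + 2*(r-2) ≤ (p-1)*(r-1) := by
      have h5 : p - 1 = p' + 2 := by omega
      have h6 : r - 1 = r' + 2 := by omega
      have h7 : r - 2 = r' + 1 := by omega
      rw [h5, h6, h7]
      exact ineq_helper p' r'
    have e2 : x ^ ((p-1)+2*(r-2)) ≤ x ^ ((p-1)*(r-1)) := Nat.pow_le_pow_right (by omega) e1
    have e3 : x ^ ((p-1)+2*(r-2)) = x^(p-1) * (x^2)^(r-2) := by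
      rw [pow_add]
      congr 1
      rw [pow_mul]
    have e4 : (3:ℕ)^(p-1) ≤ x^(p-1) := Nat.pow_le_pow_left hx3 _
    have e5 : (9:ℕ)^(r-2) ≤ (x^2)^(r-2) := Nat.pow_le_pow_left (by nlinarith) _
    have e6 : p < 3^(p-1) := lt_three_pow_pred (by omega)
    have e7 : r^2 ≤ 9^(r-2) := by
      have h8 : r - 2 = r' + 1 := by omega
      rw [h8, hr']
      exact sq_le_nine_pow r'
    have key : p * r^2 < x ^ ((p-1)*(r-1)) := by
      calc p * r^2 < 3^(p-1) * r^2 := by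
            apply Nat.mul_lt_mul_of_lt_of_le e6 (le_refl _)
            positivity
        _ ≤ 3^(p-1) * 9^(r-2) := Nat.mul_le_mul_left _ e7
        _ ≤ x^(p-1) * (x^2)^(r-2) := Nat.mul_le_mul e4 e5
        _ = x ^ ((p-1)+2*(r-2)) := e3.symm
        _ ≤ x ^ ((p-1)*(r-1)) := e2
    have hchain : p * r * X < C * X := by
      calc p * r * X ≤ p * r * (r * x ^ (r-1)) := Nat.mul_le_mul_left _ h2
        _ = (p * r^2) * x^(r-1) := by ring
        _ < x ^ ((p-1)*(r-1)) * x^(r-1) := by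
            apply Nat.mul_lt_mul_of_lt_of_le key (le_refl _)
            positivity
        _ = (x ^ p) ^ (r-1) := hexp.symm
        _ < Z' := h1
        _ = C * X := hCX.symm
    exact Nat.lt_of_mul_lt_mul_right hchain
  obtain ⟨t, ht, htC, htp, htr⟩ := exists_prime_dvd_ne_ne hp hr (Ne.symm hrp) hsize hvCp hvCr
  haveI : Fact t.Prime := ⟨ht⟩
  haveI : NeZero t := ⟨ht.pos.ne'⟩
  refine ⟨t, ht, htC.trans hCgs, htp, ?_⟩
  have htZ' : t ∣ Z' := htC.trans hCZ'
  have htZ : t ∣ Z := htC.trans hCZ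
  have h1 : ((x ^ r : ℕ) : ZMod t) ≠ 1 := by
    intro h
    have hd := dvd_k_of_dvd_gs h htZ
    exact htp ((Nat.prime_dvd_prime_iff_eq ht hp).mp hd)
  have h2 : ((x ^ p : ℕ) : ZMod t) ≠ 1 := by
    intro h
    have hd := dvd_k_of_dvd_gs h htZ'
    exact htr ((Nat.prime_dvd_prime_iff_eq ht hr).mp hd)
  have h3 : (q : ZMod t) ^ (r * p ^ j) = 1 := by
    have hpow : ((x ^ p : ℕ) : ZMod t) ^ r = 1 := pow_eq_one_of_dvd_gs (Nat.one_le_pow _ _ (by omega)) htZ'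
    have : (q : ZMod t) ^ (r * p ^ j) = ((x ^ p : ℕ) : ZMod t) ^ r := by
      rw [hxp]; push_cast; rw [← pow_mul, mul_comm]
    rw [this, hpow]
  have hford : orderOf (q : ZMod t) ∣ r * p ^ j := orderOf_dvd_iff_pow_eq_one.mpr h3
  have hnford1 : ¬ orderOf (q : ZMod t) ∣ p ^ j := by
    intro h
    apply h2
    have hone : (q : ZMod t) ^ (p ^ j) = 1 := orderOf_dvd_iff_pow_eq_one.mp h
    rw [hxp]; push_cast; exact hone
  have hnford2 : ¬ orderOf (q : ZMod t) ∣ r * p ^ (j-1) := by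
    intro h
    apply h1
    have hone : (q : ZMod t) ^ (r * p ^ (j-1)) = 1 := orderOf_dvd_iff_pow_eq_one.mp h
    have hxr : x ^ r = q ^ (r * p ^ (j-1)) := by
      rw [hx, ← pow_mul, mul_comm]
    rw [hxr]; push_cast; exact hone
  have hrf : r ∣ orderOf (q : ZMod t) := by
    by_contra hnr
    have hcop2 : (orderOf (q : ZMod t)).Coprime r :=
      Nat.Coprime.symm ((hr.coprime_iff_not_dvd).mpr hnr)
    exact hnford1 (hcop2.dvd_of_dvd_mul_left hford)
  obtain ⟨g, hg⟩ := hrf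
  have hgdvd : g ∣ p ^ j := by
    have hmul : r * g ∣ r * p ^ j := hg ▸ hford
    exact (mul_dvd_mul_iff_left (by omega : r ≠ 0)).mp hmul
  obtain ⟨c, hcle, hc⟩ := (Nat.dvd_prime_pow hp).mp hgdvd
  have hcj : c = j := by
    by_contra hcj
    apply hnford2
    rw [hg, hc]
    exact mul_dvd_mul_left r (pow_dvd_pow p (by omega))
  rw [hg, hc, hcj]


lemma sigma_prime_pow {q : ℕ} (hq : q.Prime) (k : ℕ) :
    ArithmeticFunction.sigma 1 (q ^ k) = gs q (k + 1) := by
  rw [ArithmeticFunction.sigma_one_apply, Nat.divisors_prime_pow hq, Finset.sum_map]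
  simp [gs]

theorem exponents_in_S
    (N p α s : ℕ) (q β : Fin s → ℕ)
    (hN : N = p ^ α * ∏ i, q i ^ (2 * β i))
    (hodd : Odd N)
    (hperf : ArithmeticFunction.sigma 1 N = 2 * N)
    (hp : p.Prime) (hpodd : Odd p)
    (hq : ∀ i, (q i).Prime) (hqodd : ∀ i, Odd (q i))
    (hinj : Function.Injective q)
    (hpq : ∀ i, p ≠ q i)
    (hα4 : α % 4 = 1) (hp4 : p % 4 = 1)
    (hαpos : 0 < α) (hβpos : ∀ i, 0 < β i)
    (hk : ∀ i, p ^ 2 ∣ 2 * β i + 1)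
    (hnd : ¬ p ^ 10 ∣ N)
    (T : Finset (Fin s))
    (hTdef : T = Finset.univ.filter fun i => q i ≡ 1 [MOD p]) :
    (T.filter fun i => 2 * β i + 1 = p ^ 3).card = 1 ∧
    (T.filter fun i => 2 * β i + 1 = p ^ 2).card = 3 := by
  haveI : Fact p.Prime := ⟨hp⟩
  haveI : NeZero p := ⟨hp.pos.ne'⟩
  have hp2 := hp.two_le
  have hp3 : 3 ≤ p := odd_prime_three_le hp hpodd
  have hq3 : ∀ i, 3 ≤ q i := fun i => odd_prime_three_le (hq i) (hqodd i)
  have hqp' : ∀ i, ¬ p ∣ q i := by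
    intro i hd
    exact (hpq i) ((Nat.prime_dvd_prime_iff_eq hp (hq i)).mp hd)
  have hq0 : ∀ i, (0:ℕ) < q i ^ (2 * β i) := fun i => pow_pos (by have := hq3 i; omega) _
  have hprod0 : (0:ℕ) < ∏ i, q i ^ (2 * β i) := Finset.prod_pos (fun i _ => hq0 i)
  have hN0 : N ≠ 0 := by
    rw [hN]; exact Nat.mul_ne_zero (pow_pos hp.pos α).ne' hprod0.ne'
  have hgs0 : ∀ i, gs (q i) (2 * β i + 1) ≠ 0 := fun i => (gs_pos (by omega)).ne'
  -- coprimalities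
  have hcop1 : Nat.Coprime (p ^ α) (∏ i, q i ^ (2 * β i)) := by
    apply Nat.Coprime.pow_left
    apply Nat.Coprime.prod_right
    intro i _
    exact Nat.Coprime.pow_right _ ((Nat.coprime_primes hp (hq i)).mpr (hpq i))
  have hpair : ((Finset.univ : Finset (Fin s)) : Set (Fin s)).Pairwise
      (Function.onFun Nat.Coprime fun i => q i ^ (2 * β i)) := by
    intro i _ j _ hij
    have h1 : Nat.Coprime (q i) (q j) :=
      (Nat.coprime_primes (hq i) (hq j)).mpr (fun h => hij (hinj h))
    exact Nat.Coprime.pow _ _ h1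
  -- σ decomposition
  have hσN : ArithmeticFunction.sigma 1 N
      = gs p (α + 1) * ∏ i, gs (q i) (2 * β i + 1) := by
    rw [hN, ArithmeticFunction.isMultiplicative_sigma.map_mul_of_coprime hcop1]
    congr 1
    · exact sigma_prime_pow hp α
    · rw [ArithmeticFunction.IsMultiplicative.map_prod _
        ArithmeticFunction.isMultiplicative_sigma Finset.univ hpair]
      exact Finset.prod_congr rfl (fun i _ => sigma_prime_pow (hq i) (2 * β i))
  -- valuation of N
  have hfacprod : (∏ i, q i ^ (2*β i)).factorization p = 0 := by
    apply Nat.factorization_eq_zero_of_not_dvd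
    intro hd
    obtain ⟨i, -, hdi⟩ := (Nat.Prime.prime hp).exists_mem_finset_dvd hd
    exact hqp' i (hp.dvd_of_dvd_pow hdi)
  have hvN : N.factorization p = α := by
    rw [hN, Nat.factorization_mul (pow_pos hp.pos α).ne' hprod0.ne', Finsupp.add_apply,
        hp.factorization_pow, Finsupp.single_eq_same, hfacprod]
    omega
  have hα9 : α ≤ 9 := by
    by_contra h
    apply hnd
    rw [hp.pow_dvd_iff_le_factorization hN0, hvN]
    omega
  -- sum of valuations
  have hσp0 : (gs p (α+1)).factorization p = 0 := by
    apply Nat.factorization_eq_zero_of_not_dvd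
    rw [dvd_gs_iff]
    intro hcon
    rw [ZMod.natCast_self] at hcon
    rw [Finset.sum_eq_single 0] at hcon
    · simp at hcon
    · intro b _ hb; exact zero_pow hb
    · intro hmem; exact absurd (Finset.mem_range.mpr (by omega)) hmem
  have hsum : ∑ i, (gs (q i) (2 * β i + 1)).factorization p = α := by
    have h2N : (ArithmeticFunction.sigma 1 N).factorization p = α := by
      rw [hperf, Nat.factorization_mul two_ne_zero hN0, Finsupp.add_apply, hvN,
          Nat.factorization_eq_zero_of_not_dvd (p := p) (n := 2)
            (by intro h; have := Nat.le_of_dvd (by norm_num) h; omega)]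
      omega
    rw [hσN, Nat.factorization_mul (gs_pos (by omega)).ne'
          (Finset.prod_pos (fun i _ => Nat.pos_of_ne_zero (hgs0 i))).ne',
        Finsupp.add_apply, hσp0,
        Nat.factorization_prod (fun i _ => hgs0 i)] at h2N
    rw [zero_add, Finsupp.finset_sum_apply] at h2N
    exact h2N
  -- membership characterization
  have hmemT : ∀ i, i ∈ T ↔ (q i : ZMod p) = 1 := by
    intro i
    rw [hTdef, Finset.mem_filter]
    constructor
    · rintro ⟨-, h⟩
      have h2 := (ZMod.natCast_eq_natCast_iff _ _ _).mpr h
      simpa using h2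
    · intro h
      refine ⟨Finset.mem_univ _, ?_⟩
      have h2 : ((q i : ℕ) : ZMod p) = ((1:ℕ) : ZMod p) := by simpa using h
      exact (ZMod.natCast_eq_natCast_iff _ _ _).mp h2
  -- v ≥ 2 on T
  have hvT2 : ∀ i ∈ T, 2 ≤ (gs (q i) (2 * β i + 1)).factorization p := by
    intro i hi
    have hq1 : (q i : ZMod p) = 1 := (hmemT i).mp hi
    have hb1 : p ∣ gs (q i) p := by
      rw [dvd_gs_iff, hq1]
      simp [ZMod.natCast_self]
    have hb2 : p ∣ gs ((q i) ^ p) p := by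
      rw [dvd_gs_iff]
      have hc : ((q i ^ p : ℕ) : ZMod p) = 1 := by push_cast; rw [hq1]; simp
      rw [hc]
      simp [ZMod.natCast_self]
    have hmul : p * p ∣ gs ((q i) ^ p) p * gs (q i) p := mul_dvd_mul hb2 hb1
    rw [← gs_mul] at hmul
    have hdvd2 : gs (q i) (p * p) ∣ gs (q i) (2 * β i + 1) := by
      apply gs_dvd_gs
      have := hk i
      rwa [pow_two] at this
    have hfin : p ^ 2 ∣ gs (q i) (2 * β i + 1) := by
      rw [pow_two]
      exact hmul.trans hdvd2
    exact (hp.pow_dvd_iff_le_factorization (hgs0 i)).mp hfin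
  -- |T| ≤ 4
  have hTsum : ∑ i ∈ T, (gs (q i) (2 * β i + 1)).factorization p ≤ α := by
    rw [← hsum]
    exact Finset.sum_le_sum_of_subset (Finset.subset_univ T)
  have h2T : 2 * T.card ≤ ∑ i ∈ T, (gs (q i) (2 * β i + 1)).factorization p := by
    have := Finset.card_nsmul_le_sum T _ 2 hvT2
    simpa [mul_comm] using this
  have hTcard4 : T.card ≤ 4 := by omega
  -- demand-to-index
  have hindex : ∀ (i : Fin s) (o : ℕ), 0 < o → p ∣ o →
      (∃ t, t.Prime ∧ t ∣ gs (q i) (2 * β i + 1) ∧ t ≠ p ∧ orderOf ((q i : ZMod t)) = o) →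
      ∃ l, l ∈ T.erase i ∧ orderOf ((q i : ZMod (q l))) = o := by
    rintro i o ho hpo ⟨t, ht, htgs, htp, hto⟩
    haveI : Fact t.Prime := ⟨ht⟩
    have hq0' : ((q i : ZMod t)) ≠ 0 := by
      intro h
      rw [h] at hto
      have : ¬ IsOfFinOrder (0 : ZMod t) := by
        intro hfin
        obtain ⟨k, hk1, hk2⟩ := (isOfFinOrder_iff_pow_eq_one).mp hfin
        rw [zero_pow hk1.ne'] at hk2
        exact zero_ne_one hk2
      rw [orderOf_eq_zero this] at hto
      omega
    have hord_dvd : o ∣ t - 1 := by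
      rw [← hto]
      exact orderOf_dvd_iff_pow_eq_one.mpr (ZMod.pow_card_sub_one_eq_one hq0')
    have hpt1 : p ∣ t - 1 := dvd_trans hpo hord_dvd
    have ht1pos : 1 ≤ t := ht.pos
    have ht2 : 2 < t := by
      rcases Nat.lt_or_ge t 3 with h | h
      · exfalso
        have h2 := ht.two_le
        have ht2' : t = 2 := by omega
        rw [ht2'] at hpt1
        have := Nat.le_of_dvd (by norm_num) hpt1
        omega
      · omega
    have htN : t ∣ N := by
      have h1 : t ∣ ∏ l, gs (q l) (2 * β l + 1) :=
        htgs.trans (Finset.dvd_prod_of_mem _ (Finset.mem_univ i))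
      have h2 : t ∣ ArithmeticFunction.sigma 1 N := by
        rw [hσN]; exact h1.mul_left _
      rw [hperf] at h2
      rcases (Nat.Prime.dvd_mul ht).mp h2 with h | h
      · exfalso
        have := Nat.le_of_dvd (by norm_num) h
        omega
      · exact h
    have hex : ∃ l, t = q l := by
      rw [hN] at htN
      rcases (Nat.Prime.dvd_mul ht).mp htN with h | h
      · exact absurd ((Nat.prime_dvd_prime_iff_eq ht hp).mp (ht.dvd_of_dvd_pow h)) htp
      · obtain ⟨l, -, hdl⟩ := (Nat.Prime.prime ht).exists_mem_finset_dvd h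
        exact ⟨l, (Nat.prime_dvd_prime_iff_eq ht (hq l)).mp (ht.dvd_of_dvd_pow hdl)⟩
    obtain ⟨l, hl⟩ := hex
    refine ⟨l, ?_, by rw [← hl]; exact hto⟩
    rw [Finset.mem_erase]
    constructor
    · intro h
      apply hq0'
      rw [← h, ← hl]
      exact ZMod.natCast_self t
    · rw [hmemT]
      have hmod : t ≡ 1 [MOD p] := ((Nat.modEq_iff_dvd' ht1pos).mpr hpt1).symm
      have := (ZMod.natCast_eq_natCast_iff _ _ _).mpr hmod
      rw [← hl]
      simpa using this
  -- cardinality of demand sets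
  have hOcard : ∀ (i : Fin s) (O : Finset ℕ),
      (∀ o ∈ O, 0 < o ∧ p ∣ o ∧
        ∃ t, t.Prime ∧ t ∣ gs (q i) (2 * β i + 1) ∧ t ≠ p ∧ orderOf ((q i : ZMod t)) = o) →
      O.card ≤ (T.erase i).card := by
    intro i O hO
    haveI : Nonempty (Fin s) := ⟨i⟩
    have hex : ∀ o ∈ O, ∃ l, l ∈ T.erase i ∧ orderOf ((q i : ZMod (q l))) = o := by
      intro o ho
      obtain ⟨h1, h2, h3⟩ := hO o ho
      exact hindex i o h1 h2 h3
    classical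
    choose! f hf using hex
    apply Finset.card_le_card_of_injOn f
    · intro o ho; exact (hf o ho).1
    · intro o1 h1 o2 h2 heq
      have e1 := (hf o1 h1).2
      have e2 := (hf o2 h2).2
      rw [← e1, ← e2, heq]
  -- pure demand-set cardinality
  have hOpure : ∀ a : ℕ, ((Finset.Icc 1 a).image (p ^ ·)).card = a := by
    intro a
    rw [Finset.card_image_of_injective _ (Nat.pow_right_injective hp2), Nat.card_Icc]
    omega
  -- facts about members of T
  have hTfacts : ∀ i ∈ T, 2 * β i + 1 = p ^ ((2 * β i + 1).factorization p)
      ∧ 2 ≤ (2 * β i + 1).factorization p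
      ∧ (2 * β i + 1).factorization p ≤ T.card - 1 := by
    intro i hi
    have hn0 : 2 * β i + 1 ≠ 0 := by omega
    have ha2 : 2 ≤ (2 * β i + 1).factorization p :=
      (hp.pow_dvd_iff_le_factorization hn0).mp (hk i)
    have hpuredem : ∀ o ∈ (Finset.Icc 1 ((2 * β i + 1).factorization p)).image (p ^ ·),
        0 < o ∧ p ∣ o ∧
        ∃ t, t.Prime ∧ t ∣ gs (q i) (2 * β i + 1) ∧ t ≠ p ∧ orderOf ((q i : ZMod t)) = o := by
      intro o ho
      rw [Finset.mem_image] at ho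
      obtain ⟨j, hj, rfl⟩ := ho
      rw [Finset.mem_Icc] at hj
      refine ⟨pow_pos hp.pos j, dvd_pow_self p (by omega), ?_⟩
      exact demandB hp hpodd (hq3 i) (hqp' i) hj.1
        ((pow_dvd_pow p hj.2).trans (Nat.ordProj_dvd _ _))
    have hale : (2 * β i + 1).factorization p ≤ T.card - 1 := by
      have h1 := hOcard i _ hpuredem
      rw [hOpure, Finset.card_erase_of_mem hi] at h1
      exact h1
    -- exactness
    have hself : p ^ ((2 * β i + 1).factorization p)
        * ((2 * β i + 1) / p ^ ((2 * β i + 1).factorization p)) = 2 * β i + 1 :=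
      Nat.ordProj_mul_ordCompl_eq_self _ p
    have hmndvd : ¬ p ∣ (2 * β i + 1) / p ^ ((2 * β i + 1).factorization p) :=
      Nat.not_dvd_ordCompl hp hn0
    have hm1 : (2 * β i + 1) / p ^ ((2 * β i + 1).factorization p) = 1 := by
      by_contra hm1
      obtain ⟨r, hr, hrm⟩ := Nat.exists_prime_and_dvd hm1
      have hmd : ((2 * β i + 1) / p ^ ((2 * β i + 1).factorization p)) ∣ 2 * β i + 1 :=
        dvd_of_mul_left_eq _ hself
      have hrn : r ∣ 2 * β i + 1 := hrm.trans hmd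
      have hrodd : Odd r := by
        rcases Nat.even_or_odd r with h | h
        · exfalso
          have h2 : (2:ℕ) ∣ 2 * β i + 1 := dvd_trans (even_iff_two_dvd.mp h) hrn
          omega
        · exact h
      have hrp' : r ≠ p := fun h => hmndvd (h ▸ hrm)
      -- mixed demand set
      have hmixdem : ∀ o ∈ ((Finset.Icc 1 ((2 * β i + 1).factorization p)).image (p ^ ·))
          ∪ ((Finset.Icc 1 ((2 * β i + 1).factorization p)).image (fun j => r * p ^ j)),
          0 < o ∧ p ∣ o ∧
          ∃ t, t.Prime ∧ t ∣ gs (q i) (2 * β i + 1) ∧ t ≠ p ∧ orderOf ((q i : ZMod t)) = o := by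
        intro o ho
        rw [Finset.mem_union] at ho
        rcases ho with ho | ho
        · exact hpuredem o ho
        · rw [Finset.mem_image] at ho
          obtain ⟨j, hj, rfl⟩ := ho
          rw [Finset.mem_Icc] at hj
          refine ⟨Nat.mul_pos hr.pos (pow_pos hp.pos j), Dvd.dvd.mul_left (dvd_pow_self p (by omega)) r, ?_⟩
          apply demandC hp hpodd hr hrodd hrp' (hq3 i) (hqp' i) hj.1
          have h1 : r * p ^ j ∣ p ^ ((2 * β i + 1).factorization p)
              * ((2 * β i + 1) / p ^ ((2 * β i + 1).factorization p)) := by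
            rw [mul_comm (p ^ ((2 * β i + 1).factorization p)) _]
            exact mul_dvd_mul hrm (pow_dvd_pow p hj.2)
          rwa [hself] at h1
      have hdisj : Disjoint ((Finset.Icc 1 ((2 * β i + 1).factorization p)).image (p ^ ·))
          ((Finset.Icc 1 ((2 * β i + 1).factorization p)).image (fun j => r * p ^ j)) := by
        rw [Finset.disjoint_left]
        intro o h1 h2
        rw [Finset.mem_image] at h1 h2
        obtain ⟨j1, hj1, he1⟩ := h1
        obtain ⟨j2, hj2, he2⟩ := h2
        have hrdvd : r ∣ p ^ j1 := by
          rw [he1, ← he2]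
          exact Dvd.intro _ rfl
        exact hrp' ((Nat.prime_dvd_prime_iff_eq hr hp).mp (hr.dvd_of_dvd_pow hrdvd))
      have hcard2 := hOcard i _ hmixdem
      rw [Finset.card_union_of_disjoint hdisj, hOpure,
          Finset.card_image_of_injective _ (fun a b hab => by
            have : p ^ a = p ^ b := by
              have hr0 : 0 < r := hr.pos
              exact Nat.eq_of_mul_eq_mul_left hr0 hab
            exact Nat.pow_right_injective hp2 this),
          Nat.card_Icc, Finset.card_erase_of_mem hi] at hcard2
      omega
    refine ⟨?_, ha2, hale⟩
    calc 2 * β i + 1 = p ^ ((2 * β i + 1).factorization p)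
          * ((2 * β i + 1) / p ^ ((2 * β i + 1).factorization p)) := hself.symm
      _ = p ^ ((2 * β i + 1).factorization p) := by rw [hm1, mul_one]
  -- exact valuation on T
  have hvA : ∀ i ∈ T, (gs (q i) (2*β i + 1)).factorization p = (2*β i + 1).factorization p := by
    intro i hi
    obtain ⟨hni, -, -⟩ := hTfacts i hi
    conv_lhs => rw [hni]
    rw [gs_pp_fact hp hpodd (by have := hq3 i; omega) ((hmemT i).mp hi)]
  -- non-T indices contribute 0
  have hnonT : ∀ i, i ∉ T → (gs (q i) (2*β i+1)).factorization p = 0 := by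
    intro i hiT
    by_contra hvi
    have hpdvd : p ∣ gs (q i) (2 * β i + 1) := by
      have h1 : 1 ≤ (gs (q i) (2*β i+1)).factorization p := by omega
      have h2 := (hp.pow_dvd_iff_le_factorization (hgs0 i)).mpr h1
      rwa [pow_one] at h2
    have hq1' : (q i : ZMod p) ≠ 1 := fun h => hiT ((hmemT i).mpr h)
    have hq0'' : ((q i : ZMod p)) ≠ 0 := by
      rw [Ne, ZMod.natCast_eq_zero_iff]
      exact hqp' i
    have hee : (q i : ZMod p) ^ (orderOf (q i : ZMod p)) = 1 := pow_orderOf_eq_one _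
    have he1 : orderOf (q i : ZMod p) ≠ 1 := fun h => hq1' (orderOf_eq_one_iff.mp h)
    have hedvd : orderOf (q i : ZMod p) ∣ p - 1 :=
      orderOf_dvd_iff_pow_eq_one.mpr (ZMod.pow_card_sub_one_eq_one hq0'')
    have hepos : 0 < orderOf (q i : ZMod p) := by
      rcases Nat.eq_zero_or_pos (orderOf ((q i : ZMod p))) with h | h
      · exfalso
        rw [h] at hedvd
        have := Nat.eq_zero_of_zero_dvd hedvd
        omega
      · exact h
    have hele : orderOf (q i : ZMod p) ≤ p - 1 := Nat.le_of_dvd (by omega) hedvd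
    have hen : orderOf (q i : ZMod p) ∣ 2 * β i + 1 :=
      orderOf_dvd_iff_pow_eq_one.mpr (pow_eq_one_of_dvd_gs (by have := hq3 i; omega) hpdvd)
    have hn0 : 2 * β i + 1 ≠ 0 := by omega
    have ha2 : 2 ≤ (2 * β i + 1).factorization p :=
      (hp.pow_dvd_iff_le_factorization hn0).mp (hk i)
    have hself : p ^ ((2 * β i + 1).factorization p)
        * ((2 * β i + 1) / p ^ ((2 * β i + 1).factorization p)) = 2 * β i + 1 :=
      Nat.ordProj_mul_ordCompl_eq_self _ p
    have hmndvd : ¬ p ∣ (2 * β i + 1) / p ^ ((2 * β i + 1).factorization p) :=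
      Nat.not_dvd_ordCompl hp hn0
    have hcop3 : (orderOf ((q i : ZMod p))).Coprime (p ^ ((2 * β i + 1).factorization p)) := by
      apply Nat.Coprime.pow_right
      have hnotdvd : ¬ p ∣ orderOf ((q i : ZMod p)) := by
        intro h
        have := Nat.le_of_dvd hepos h
        omega
      exact ((Nat.Prime.coprime_iff_not_dvd hp).mpr hnotdvd).symm
    have hem : orderOf ((q i : ZMod p)) ∣ (2 * β i + 1) / p ^ ((2 * β i + 1).factorization p) := by
      apply hcop3.dvd_of_dvd_mul_left
      rw [hself]
      exact hen
    obtain ⟨r, hr, hre⟩ := Nat.exists_prime_and_dvd he1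
    have hrm : r ∣ (2 * β i + 1) / p ^ ((2 * β i + 1).factorization p) := hre.trans hem
    have hrn : r ∣ 2 * β i + 1 := hrm.trans (dvd_of_mul_left_eq _ hself)
    have hrodd : Odd r := by
      rcases Nat.even_or_odd r with h | h
      · exfalso
        have h2 : (2:ℕ) ∣ 2 * β i + 1 := dvd_trans (even_iff_two_dvd.mp h) hrn
        omega
      · exact h
    have hrp' : r ≠ p := fun h => hmndvd (h ▸ hrm)
    -- four demands force |T| ≥ 4
    have hdem4 : ∀ o ∈ ((Finset.Icc 1 2).image (p ^ ·))
        ∪ ((Finset.Icc 1 2).image (fun j => r * p ^ j)),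
        0 < o ∧ p ∣ o ∧
        ∃ t, t.Prime ∧ t ∣ gs (q i) (2 * β i + 1) ∧ t ≠ p ∧ orderOf ((q i : ZMod t)) = o := by
      intro o ho
      rw [Finset.mem_union] at ho
      rcases ho with ho | ho
      · rw [Finset.mem_image] at ho
        obtain ⟨j, hj, rfl⟩ := ho
        rw [Finset.mem_Icc] at hj
        refine ⟨pow_pos hp.pos j, dvd_pow_self p (by omega), ?_⟩
        apply demandB hp hpodd (hq3 i) (hqp' i) hj.1
        exact (pow_dvd_pow p (le_trans hj.2 ha2)).trans (Nat.ordProj_dvd _ _)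
      · rw [Finset.mem_image] at ho
        obtain ⟨j, hj, rfl⟩ := ho
        rw [Finset.mem_Icc] at hj
        refine ⟨Nat.mul_pos hr.pos (pow_pos hp.pos j),
          Dvd.dvd.mul_left (dvd_pow_self p (by omega)) r, ?_⟩
        apply demandC hp hpodd hr hrodd hrp' (hq3 i) (hqp' i) hj.1
        have h1 : r * p ^ j ∣ p ^ ((2 * β i + 1).factorization p)
            * ((2 * β i + 1) / p ^ ((2 * β i + 1).factorization p)) := by
          rw [mul_comm (p ^ ((2 * β i + 1).factorization p)) _]
          exact mul_dvd_mul hrm (pow_dvd_pow p (le_trans hj.2 ha2))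
        rwa [hself] at h1
    have hdisj4 : Disjoint ((Finset.Icc 1 2).image (p ^ ·))
        ((Finset.Icc 1 2).image (fun j => r * p ^ j)) := by
      rw [Finset.disjoint_left]
      intro o h1 h2
      rw [Finset.mem_image] at h1 h2
      obtain ⟨j1, hj1, he1'⟩ := h1
      obtain ⟨j2, hj2, he2'⟩ := h2
      have hrdvd : r ∣ p ^ j1 := by
        rw [he1', ← he2']
        exact Dvd.intro _ rfl
      exact hrp' ((Nat.prime_dvd_prime_iff_eq hr hp).mp (hr.dvd_of_dvd_pow hrdvd))
    have h4 := hOcard i _ hdem4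
    rw [Finset.card_union_of_disjoint hdisj4, hOpure,
        Finset.card_image_of_injective _ (fun a b hab => by
          have hpow : p ^ a = p ^ b := Nat.eq_of_mul_eq_mul_left hr.pos hab
          exact Nat.pow_right_injective hp2 hpow),
        Nat.card_Icc, Finset.erase_eq_of_notMem hiT] at h4
    -- v i ≥ 3
    have hv3 : 3 ≤ (gs (q i) (2*β i+1)).factorization p := by
      have hW0 : p ∣ gs (q i) (orderOf ((q i : ZMod p))) := by
        rw [dvd_gs_iff]
        have hgeq := geom_sum_mul ((q i : ZMod p)) (orderOf ((q i : ZMod p)))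
        rw [hee, sub_self] at hgeq
        rcases mul_eq_zero.mp hgeq with h | h
        · exact h
        · exact absurd (by rwa [sub_eq_zero] at h) hq1'
      have hW1 : p ∣ gs ((q i) ^ (orderOf ((q i : ZMod p)))) p := by
        rw [dvd_gs_iff]
        have hb : ((q i ^ orderOf ((q i : ZMod p)) : ℕ) : ZMod p) = 1 := by
          push_cast; exact hee
        rw [hb]
        simp [ZMod.natCast_self]
      have hW2 : p ∣ gs ((q i) ^ (orderOf ((q i : ZMod p)) * p)) p := by
        rw [dvd_gs_iff]
        have hb : ((q i ^ (orderOf ((q i : ZMod p)) * p) : ℕ) : ZMod p) = 1 := by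
          push_cast
          rw [pow_mul, hee, one_pow]
        rw [hb]
        simp [ZMod.natCast_self]
      have hprod : gs (q i) (orderOf ((q i : ZMod p)) * p * p)
          = gs ((q i)^(orderOf ((q i : ZMod p)) * p)) p
            * (gs ((q i)^(orderOf ((q i : ZMod p)))) p * gs (q i) (orderOf ((q i : ZMod p)))) := by
        rw [gs_mul (q i) (orderOf ((q i : ZMod p)) * p) p,
            gs_mul (q i) (orderOf ((q i : ZMod p))) p]
      have h3dvd : p ^ 3 ∣ gs (q i) (orderOf ((q i : ZMod p)) * p * p) := by
        rw [hprod]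
        have h33 : p ^ 3 = p * (p * p) := by ring
        rw [h33]
        exact mul_dvd_mul hW2 (mul_dvd_mul hW1 hW0)
      have hd : (orderOf ((q i : ZMod p))) * p * p ∣ 2 * β i + 1 := by
        have h1 : (orderOf ((q i : ZMod p))) * (p * p)
            ∣ ((2 * β i + 1) / p ^ ((2 * β i + 1).factorization p))
              * p ^ ((2 * β i + 1).factorization p) := by
          apply mul_dvd_mul hem
          rw [← pow_two]
          exact pow_dvd_pow p ha2
        rw [mul_comm ((2 * β i + 1) / p ^ ((2 * β i + 1).factorization p)) _, hself] at h1
        rwa [← mul_assoc] at h1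
      exact (hp.pow_dvd_iff_le_factorization (hgs0 i)).mp (h3dvd.trans (gs_dvd_gs _ hd))
    -- budget contradiction
    have hsub : ∑ l ∈ insert i T, (gs (q l) (2*β l+1)).factorization p ≤ α := by
      rw [← hsum]
      exact Finset.sum_le_sum_of_subset (Finset.subset_univ _)
    rw [Finset.sum_insert hiT] at hsub
    omega
  -- α is the sum over T
  have hαT : ∑ i ∈ T, (gs (q i) (2*β i+1)).factorization p = α := by
    rw [← hsum]
    apply Finset.sum_subset (Finset.subset_univ T)
    intro x _ hx
    exact hnonT x hx
  have hTne : T.Nonempty := by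
    rcases Finset.eq_empty_or_nonempty T with h | h
    · exfalso
      rw [h, Finset.sum_empty] at hαT
      omega
    · exact h
  obtain ⟨i0, hi0⟩ := hTne
  have hT3 : 3 ≤ T.card := by
    obtain ⟨-, h2, h3⟩ := hTfacts i0 hi0
    omega
  have hTcard : T.card = 4 := by
    by_contra hc
    have hT3' : T.card = 3 := by omega
    have hall : ∀ i ∈ T, (gs (q i) (2*β i+1)).factorization p = 2 := by
      intro i hi
      obtain ⟨-, h2, h3⟩ := hTfacts i hi
      have := hvA i hi
      omega
    have hsum6 : ∑ i ∈ T, (gs (q i) (2*β i+1)).factorization p = 2 * T.card := by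
      rw [Finset.sum_congr rfl hall, Finset.sum_const, smul_eq_mul]
      ring
    omega
  have hA23 : ∀ i ∈ T, (2*β i+1).factorization p = 2 ∨ (2*β i+1).factorization p = 3 := by
    intro i hi
    obtain ⟨-, h2, h3⟩ := hTfacts i hi
    omega
  have hsumA : ∑ i ∈ T, (2*β i+1).factorization p = α := by
    rw [← hαT]
    exact Finset.sum_congr rfl (fun i hi => (hvA i hi).symm)
  have hsplit3 : ∑ i ∈ T, (2*β i+1).factorization p
      = 2 * T.card + (T.filter (fun i => (2*β i+1).factorization p = 3)).card := by
    rw [Finset.card_filter]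
    have hpoint : ∀ i ∈ T, (2*β i+1).factorization p
        = 2 + if (2*β i+1).factorization p = 3 then 1 else 0 := by
      intro i hi
      rcases hA23 i hi with h | h <;> simp [h]
    rw [Finset.sum_congr rfl hpoint, Finset.sum_add_distrib, Finset.sum_const, smul_eq_mul]
    omega
  have hfine : α = 9 ∧ (T.filter (fun i => (2*β i+1).factorization p = 3)).card = 1 := by
    have h1 : (T.filter (fun i => (2*β i+1).factorization p = 3)).card ≤ T.card :=
      Finset.card_filter_le _ _
    constructor <;> omega
  have hc2 : (T.filter (fun i => (2*β i+1).factorization p = 2)).card = 3 := by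
    have hpart := Finset.card_filter_add_card_filter_not
      (s := T) (p := fun i => (2*β i+1).factorization p = 3)
    have heqf : T.filter (fun i => (2*β i+1).factorization p = 2)
        = T.filter (fun i => ¬ (2*β i+1).factorization p = 3) := by
      apply Finset.filter_congr
      intro i hi
      rcases hA23 i hi with h | h <;> simp [h]
    rw [heqf]
    omega
  constructor
  · have heq : T.filter (fun i => 2 * β i + 1 = p ^ 3)
        = T.filter (fun i => (2*β i+1).factorization p = 3) := by
      apply Finset.filter_congr
      intro i hi
      obtain ⟨hni, -, -⟩ := hTfacts i hi
      constructor
      · intro h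
        have hpp : p ^ ((2*β i+1).factorization p) = p ^ 3 := by rw [← hni, h]
        exact Nat.pow_right_injective hp2 hpp
      · intro h
        rw [hni, h]
    rw [heq]
    exact hfine.2
  · have heq : T.filter (fun i => 2 * β i + 1 = p ^ 2)
        = T.filter (fun i => (2*β i+1).factorization p = 2) := by
      apply Finset.filter_congr
      intro i hi
      obtain ⟨hni, -, -⟩ := hTfacts i hi
      constructor
      · intro h
        have hpp : p ^ ((2*β i+1).factorization p) = p ^ 2 := by rw [← hni, h]
        exact Nat.pow_right_injective hp2 hpp
      · intro h
        rw [hni, h]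
    rw [heq]
    exact hc2
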